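/- Let F be a field, k ≥ 2, V a nonsingular k×k matrix over F, P a super-regular k×k matrix over F, Q = P⁻¹ = [q_{ij}], U = V·P with columns u_1, …, u_k, and let v_1, …, v_k be the columns of V. Let δ, ε ∈ F be nonzero with δ² ≠ ε², and fix a, b ∈ {1,…,k} with p_{ab}·q_{ba} ≠ 1. Then the k×k matrix whose first row is (ε − (ε + δ)p_{ab}q_{ba})·u_bᵗ + δ p_{ab}·v_aᵗ and whose remaining k−1 rows are δ·u_jᵗ + ε p_{aj}·v_aᵗ for j ∈ {1,…,k}∖{b} is nonsingular. -/

import Mathlib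

open Matrix Finset

/-- A square matrix is super-regular if every square submatrix (selected by injective
choices of rows and columns of equal number) is nonsingular. -/
def SuperRegular {F : Type*} [Field F] {k : ℕ} (M : Matrix (Fin k) (Fin k) F) : Prop :=
  ∀ (m : ℕ) (r c : Fin m → Fin k), Function.Injective r → Function.Injective c →
    IsUnit (M.submatrix r c).det

/-- `enum b` enumerates `Fin k` so that position `0` is `b` and positions `1,…,k−1`
list the elements of `{1,…,k}∖{b}` in increasing order. -/
def enum {k : ℕ} (b : Fin k) (i : Fin k) : Fin k :=
  if (i : ℕ) = 0 then b
  else if (i : ℕ) ≤ (b : ℕ) then ⟨(i : ℕ) - 1, lt_of_le_of_lt (Nat.sub_le _ _) i.isLt⟩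
  else i

/-- (Proposition 1) The repair matrix whose first row is
`(ε − (ε + δ)p_{ab}q_{ba})u_bᵗ + δ p_{ab} v_aᵗ` and whose remaining rows are
`δ u_jᵗ + ε p_{aj} v_aᵗ` for `j ∈ {1,…,k}∖{b}` is nonsingular. -/
lemma enum_bijective {k : ℕ} (b : Fin k) : Function.Bijective (enum b) := by
  rw [Fintype.bijective_iff_surjective_and_card]
  refine ⟨fun y => ?_, rfl⟩
  rcases lt_trichotomy (y : ℕ) (b : ℕ) with h | h | h
  · refine ⟨⟨(y : ℕ) + 1, by omega⟩, ?_⟩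
    have hb := b.isLt
    simp only [enum]
    rw [if_neg (by omega), if_pos (by omega)]
    exact Fin.ext (by simp)
  · refine ⟨⟨0, by omega⟩, ?_⟩
    simpa [enum] using (Fin.ext h).symm
  · refine ⟨y, ?_⟩
    simp only [enum]
    rw [if_neg (by omega), if_neg (by omega)]

theorem repair_matrix_nonsingular
    {F : Type*} [Field F] {k : ℕ} (hk : 2 ≤ k)
    (V P : Matrix (Fin k) (Fin k) F)
    (hV : IsUnit V.det) (hP : SuperRegular P)
    (δ ε : F) (hδ : δ ≠ 0) (hε : ε ≠ 0) (hsq : δ ^ 2 ≠ ε ^ 2)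
    (a b : Fin k) (hab : P a b * P⁻¹ b a ≠ 1) :
    IsUnit (Matrix.of fun i l =>
      if (i : ℕ) = 0 then
        (ε - (ε + δ) * P a b * P⁻¹ b a) * (V * P) l b + δ * P a b * V l a
      else
        δ * (V * P) l (enum b i) + ε * P a (enum b i) * V l a
      : Matrix (Fin k) (Fin k) F).det := by
  haveI : NeZero k := ⟨by omega⟩
  have hPdet : IsUnit P.det := by
    simpa using hP k id id Function.injective_id Function.injective_id
  have hPQ : P * P⁻¹ = 1 := Matrix.mul_nonsing_inv P hPdet
  have hVPQ : V * P * P⁻¹ = V := by rw [Matrix.mul_assoc, hPQ, Matrix.mul_one]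
  set d0 : F := ε - (ε + δ) * P a b * P⁻¹ b a with hd0
  have he0 : enum b 0 = b := by simp [enum]
  set A : Matrix (Fin k) (Fin k) F := Matrix.of (fun i c =>
    (if (i:ℕ) = 0 then d0 else δ) * (if c = enum b i then 1 else 0)
    + (if (i:ℕ) = 0 then δ * P a b else ε * P a (enum b i)) * P⁻¹ c a) with hAdef
  have hM : (Matrix.of fun i l =>
      if (i : ℕ) = 0 then
        (ε - (ε + δ) * P a b * P⁻¹ b a) * (V * P) l b + δ * P a b * V l a
      else
        δ * (V * P) l (enum b i) + ε * P a (enum b i) * V l a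
      : Matrix (Fin k) (Fin k) F) = A * (V * P)ᵀ := by
    ext i l
    have hsum2 : ∑ c, P⁻¹ c a * (V * P) l c = V l a := by
      have := congrArg (fun M => M l a) hVPQ
      simpa [Matrix.mul_apply, mul_comm] using this
    have hrow : (A * (V * P)ᵀ) i l =
        (if (i:ℕ) = 0 then d0 else δ) * (V * P) l (enum b i)
        + (if (i:ℕ) = 0 then δ * P a b else ε * P a (enum b i)) * V l a := by
      rw [Matrix.mul_apply]
      have step : ∀ c, A i c * (V * P)ᵀ c l =
          (if (i:ℕ) = 0 then d0 else δ) * ((if c = enum b i then (V * P) l c else 0))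
          + (if (i:ℕ) = 0 then δ * P a b else ε * P a (enum b i)) * (P⁻¹ c a * (V * P) l c) := by
        intro c
        simp only [hAdef, Matrix.of_apply, Matrix.transpose_apply, add_mul, mul_ite, ite_mul,
          one_mul, zero_mul, mul_zero, mul_assoc]
      rw [Finset.sum_congr rfl (fun c _ => step c), Finset.sum_add_distrib,
        ← Finset.mul_sum, ← Finset.mul_sum, Finset.sum_ite_eq' Finset.univ (enum b i), hsum2]
      simp
    rw [hrow]
    by_cases hi : (i:ℕ) = 0 <;> simp only [Fin.val_eq_zero_iff] at hi <;> simp [hi, hd0, enum]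
  -- the permutation given by `enum b`
  set e : Equiv.Perm (Fin k) := Equiv.ofBijective _ (enum_bijective b) with hedef
  have hinj : Function.Injective (enum b) := (enum_bijective b).injective
  -- rank-two decomposition of the column-permuted coefficient matrix
  set C : Matrix (Fin k) (Fin 2) F := Matrix.of (fun i t =>
    if t = 0 then (if (i:ℕ) = 0 then d0 - δ else 0)
    else (if (i:ℕ) = 0 then δ * P a b else ε * P a (enum b i))) with hCdef
  set E : Matrix (Fin 2) (Fin k) F := Matrix.of (fun t c =>
    if t = 0 then (if (c:ℕ) = 0 then 1 else 0) else P⁻¹ (enum b c) a) with hEdef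
  have hA : A.submatrix id ⇑e = δ • (1 : Matrix (Fin k) (Fin k) F) + C * E := by
    ext i c
    simp only [Matrix.submatrix_apply, id_eq, hAdef, hCdef, hEdef, Matrix.of_apply,
      Matrix.add_apply, Matrix.smul_apply, Matrix.mul_apply, Fin.sum_univ_two,
      Matrix.one_apply, hedef, Equiv.ofBijective_apply, smul_eq_mul, hinj.eq_iff]
    by_cases hi : (i:ℕ) = 0 <;> by_cases hc0 : (c:ℕ) = 0
    · have hc : c = i := Fin.ext (by omega)
      simp [hi, hc, hc0]; ring
    · have hc : c ≠ i := fun h => hc0 (by rw [h, hi])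
      simp [hi, hc0, hc, Ne.symm hc]
    · have hc : c ≠ i := fun h => hi (by rw [← h, hc0])
      simp [hi, hc0, hc, Ne.symm hc]
    · by_cases hc : c = i
      · simp [hi, hc, hc0]
      · simp [hi, hc0, hc, Ne.symm hc]
  have hval0 : ∀ c : Fin k, (c:ℕ) = 0 ↔ c = 0 := fun c => by
    rw [← Fin.val_eq_val]; simp
  -- key sums
  have hPQaa : ∑ j, P a j * P⁻¹ j a = 1 := by
    have := congrArg (fun M => M a a) hPQ
    simpa [Matrix.mul_apply] using this
  have hS : ∑ c, P⁻¹ (enum b c) a * (if (c:ℕ) = 0 then δ * P a b else ε * P a (enum b c))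
      = ε + (δ - ε) * (P a b * P⁻¹ b a) := by
    have step : ∀ c : Fin k,
        P⁻¹ (enum b c) a * (if (c:ℕ) = 0 then δ * P a b else ε * P a (enum b c))
        = ε * (P a (enum b c) * P⁻¹ (enum b c) a)
          + (if c = 0 then (δ - ε) * (P a b * P⁻¹ b a) else 0) := by
      intro c
      by_cases hc : c = 0
      · rw [hc]; simp [enum]; ring
      · rw [if_neg (fun h => hc ((hval0 c).mp h)), if_neg hc]
        ring
    rw [Finset.sum_congr rfl (fun c _ => step c), Finset.sum_add_distrib, ← Finset.mul_sum,
      Finset.sum_ite_eq' Finset.univ (0 : Fin k),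
      (enum_bijective b).sum_comp (fun j => P a j * P⁻¹ j a), hPQaa]
    simp
  -- the 2×2 matrix entries
  set Y : Matrix (Fin 2) (Fin 2) F := 1 + E * (δ⁻¹ • C) with hYdef
  have hY00 : Y 0 0 = 1 + δ⁻¹ * (d0 - δ) := by
    simp only [hYdef, Matrix.add_apply, Matrix.one_apply_eq, Matrix.mul_apply,
      Matrix.smul_apply, hEdef, hCdef, Matrix.of_apply, smul_eq_mul]
    rw [Fintype.sum_eq_single (0 : Fin k) (fun c hc => by
      have h0 : ¬((c:ℕ) = 0) := fun h => hc ((hval0 c).mp h)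
      simp [h0])]
    simp
  have hY01 : Y 0 1 = P a b := by
    simp only [hYdef, Matrix.add_apply, Matrix.mul_apply,
      Matrix.smul_apply, hEdef, hCdef, Matrix.of_apply, smul_eq_mul]
    rw [Matrix.one_apply_ne (by decide), Fintype.sum_eq_single (0 : Fin k) (fun c hc => by
      have h0 : ¬((c:ℕ) = 0) := fun h => hc ((hval0 c).mp h)
      simp [h0])]
    simp [inv_mul_cancel_left₀ hδ]
  have hY10 : Y 1 0 = P⁻¹ b a * (δ⁻¹ * (d0 - δ)) := by
    simp only [hYdef, Matrix.add_apply, Matrix.mul_apply,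
      Matrix.smul_apply, hEdef, hCdef, Matrix.of_apply, smul_eq_mul]
    rw [Matrix.one_apply_ne (by decide), Fintype.sum_eq_single (0 : Fin k) (fun c hc => by
      have h0 : ¬((c:ℕ) = 0) := fun h => hc ((hval0 c).mp h)
      simp [h0])]
    simp [he0]
  have hY11 : Y 1 1 = 1 + δ⁻¹ * (ε + (δ - ε) * (P a b * P⁻¹ b a)) := by
    simp only [hYdef, Matrix.add_apply, Matrix.one_apply_eq, Matrix.mul_apply,
      Matrix.smul_apply, hEdef, hCdef, Matrix.of_apply, smul_eq_mul]
    have step : ∀ c : Fin k,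
        (if (1 : Fin 2) = 0 then (if (c:ℕ) = 0 then (1:F) else 0) else P⁻¹ (enum b c) a) *
          (δ⁻¹ * (if (1 : Fin 2) = 0 then (if (c:ℕ) = 0 then d0 - δ else 0)
            else (if (c:ℕ) = 0 then δ * P a b else ε * P a (enum b c))))
        = δ⁻¹ * (P⁻¹ (enum b c) a *
            (if (c:ℕ) = 0 then δ * P a b else ε * P a (enum b c))) := by
      intro c; rw [if_neg (by decide), if_neg (by decide)]; ring
    rw [Finset.sum_congr rfl (fun c _ => step c), ← Finset.mul_sum, hS]
  -- assemble the determinant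
  have hfac : δ • (1 : Matrix (Fin k) (Fin k) F) + C * E = δ • (1 + (δ⁻¹ • C) * E) := by
    rw [smul_add, Matrix.smul_mul, smul_smul, mul_inv_cancel₀ hδ, one_smul]
  have hsign : ((Equiv.Perm.sign e : ℤ) : F) * A.det = δ ^ k * Y.det := by
    rw [← Matrix.det_permute', hA, hfac, Matrix.det_smul, Fintype.card_fin,
      Matrix.det_one_add_mul_comm, ← hYdef]
  have hYdet : Y.det = δ⁻¹ * δ⁻¹ * (ε * (ε + δ) * (1 - P a b * P⁻¹ b a)^2) := by
    rw [Matrix.det_fin_two, hY00, hY01, hY10, hY11, hd0]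
    field_simp
    ring
  have hεδ : ε + δ ≠ 0 := by
    intro h
    apply hsq
    have hde : δ = -ε := (neg_eq_of_add_eq_zero_right h).symm
    rw [hde]; ring
  have h1q : (1:F) - P a b * P⁻¹ b a ≠ 0 := sub_ne_zero_of_ne (Ne.symm hab)
  have hYunit : IsUnit Y.det := by
    rw [hYdet]
    exact isUnit_iff_ne_zero.mpr
      (mul_ne_zero (mul_ne_zero (inv_ne_zero hδ) (inv_ne_zero hδ))
        (mul_ne_zero (mul_ne_zero hε hεδ) (pow_ne_zero 2 h1q)))
  have hAunit : IsUnit A.det := by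
    have hu : IsUnit (((Equiv.Perm.sign e : ℤ) : F) * A.det) := by
      rw [hsign]
      exact (isUnit_iff_ne_zero.mpr (pow_ne_zero k hδ)).mul hYunit
    exact isUnit_of_mul_isUnit_right hu
  rw [hM, Matrix.det_mul, Matrix.det_transpose, Matrix.det_mul]
  exact hAunit.mul (hV.mul hPdet)
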